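/- The word problem of the group ℤ² with respect to the standard symmetric semigroup presentation is not context-free. Precisely: let Σ = {a, a⁻¹, b, b⁻¹} be a four-letter alphabet, and let ψ : Σ → ℤ² send a ↦ (1,0), a⁻¹ ↦ (-1,0), b ↦ (0,1), b⁻¹ ↦ (0,-1). Then the language { w ∈ Σ* : ψ(w) = (0,0) } is not a context-free language. -/

import Mathlib

namespace CFPump
variable {T : Type} {N : Type}

inductive PT (T N : Type) where
  | tleaf (t : T) : PT T N
  | nleaf (A : N) : PT T N
  | node (A : N) (ts : List (PT T N)) : PT T N

namespace PT

def rootSym : PT T N → Symbol T N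
  | .tleaf t => .terminal t
  | .nleaf A => .nonterminal A
  | .node A _ => .nonterminal A

def yieldS : PT T N → List (Symbol T N)
  | .tleaf t => [.terminal t]
  | .nleaf A => [.nonterminal A]
  | .node _ ts => (ts.attach.map (fun ⟨c, _⟩ => yieldS c)).flatten
decreasing_by
  have := List.sizeOf_lt_of_mem ‹_ ∈ _›
  simp_wf; omega

def size : PT T N → ℕ
  | .tleaf _ => 1
  | .nleaf _ => 1
  | .node _ ts => 1 + (ts.attach.map (fun ⟨c, _⟩ => size c)).sum
decreasing_by
  have := List.sizeOf_lt_of_mem ‹_ ∈ _›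
  simp_wf; omega

@[simp] lemma yieldS_tleaf (t : T) : yieldS (tleaf (N := N) t) = [.terminal t] := by simp [yieldS]
@[simp] lemma yieldS_nleaf (A : N) : yieldS (nleaf (T := T) A) = [.nonterminal A] := by simp [yieldS]

@[simp] lemma yieldS_node (A : N) (ts : List (PT T N)) :
    yieldS (node A ts) = (ts.map yieldS).flatten := by
  rw [yieldS]
  congr 1
  exact List.attach_map_val (l := ts) (f := yieldS)

@[simp] lemma size_node (A : N) (ts : List (PT T N)) :
    size (node A ts) = 1 + (ts.map size).sum := by
  rw [size]
  congr 2
  exact List.attach_map_val (l := ts) (f := size)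

lemma size_pos (t : PT T N) : 0 < size t := by
  cases t <;> simp [size]

end PT

variable {g : ContextFreeGrammar T}

open ContextFreeGrammar PT

/-- Well-formed parse trees w.r.t. a grammar. Leaves are always fine. -/
inductive Wf (g : ContextFreeGrammar T) : PT T g.NT → Prop
  | tleaf (t : T) : Wf g (.tleaf t)
  | nleaf (A : g.NT) : Wf g (.nleaf A)
  | node (A : g.NT) (ts : List (PT T g.NT)) (r : ContextFreeRule T g.NT) (hr : r ∈ g.rules)
      (hin : r.input = A) (hout : ts.map rootSym = r.output)
      (hts : ∀ c ∈ ts, Wf g c) : Wf g (.node A ts)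

lemma flatten_map_singleton {α : Type*} (l : List α) :
    (l.map (fun x => [x])).flatten = l := by
  induction l <;> simp_all

lemma derives_flatten (ts : List (PT T g.NT))
    (h : ∀ c ∈ ts, g.Derives [rootSym c] (yieldS c)) :
    g.Derives (ts.map rootSym) ((ts.map yieldS).flatten) := by
  induction ts with
  | nil => simpa using Derives.refl ([] : List (Symbol T g.NT))
  | cons c cs ih =>
    simp only [List.map_cons, List.flatten_cons]
    have h1 : g.Derives ([rootSym c] ++ cs.map rootSym) (yieldS c ++ cs.map rootSym) :=
      (h c (by simp)).append_right _
    have h2 : g.Derives (yieldS c ++ cs.map rootSym) (yieldS c ++ (cs.map yieldS).flatten) :=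
      (ih (fun c hc => h c (by simp [hc]))).append_left _
    exact h1.trans h2

lemma Wf.derives {t : PT T g.NT} (h : Wf g t) : g.Derives [rootSym t] (yieldS t) := by
  induction h with
  | tleaf t => simp only [rootSym, yieldS_tleaf]; rfl
  | nleaf A => simp only [rootSym, yieldS_nleaf]; rfl
  | node A ts r hr hin hout hts ih =>
    have h1 : g.Produces [rootSym (PT.node A ts)] r.output := by
      refine ⟨r, hr, ?_⟩
      have := ContextFreeRule.Rewrites.head (r := r) []
      simpa [rootSym, hin] using this
    rw [← hout] at h1
    simpa using h1.trans_derives (derives_flatten ts ih)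

/-- Leaf corresponding to a symbol. -/
def leafOf : Symbol T g.NT → PT T g.NT
  | .terminal t => .tleaf t
  | .nonterminal A => .nleaf A

@[simp] lemma rootSym_leafOf (s : Symbol T g.NT) : rootSym (leafOf (g := g) s) = s := by
  cases s <;> rfl

@[simp] lemma yieldS_leafOf (s : Symbol T g.NT) : yieldS (leafOf (g := g) s) = [s] := by
  cases s <;> simp [leafOf]

@[simp] lemma wf_leafOf (s : Symbol T g.NT) : Wf g (leafOf (g := g) s) := by
  cases s <;> constructor

lemma derives_to_forest {u v : List (Symbol T g.NT)} (h : g.Derives u v) :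
    ∃ F : List (PT T g.NT), (∀ c ∈ F, Wf g c) ∧ F.map rootSym = u ∧
      (F.map yieldS).flatten = v := by
  induction h using Relation.ReflTransGen.head_induction_on with
  | refl => exact ⟨v.map leafOf, by simp, by simp [List.map_map, Function.comp_def], by
      simp [List.map_map, Function.comp_def, flatten_map_singleton]⟩
  | head hp _ ih =>
    obtain ⟨F, hwf, hroots, hyield⟩ := ih
    obtain ⟨r, hr, hrw⟩ := hp
    obtain ⟨p, q, hu, hu'⟩ := hrw.exists_parts
    -- roots of F equal p ++ r.output ++ q; split F accordingly
    rw [hu', List.append_assoc] at hroots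
    obtain ⟨Fp, F1, hF, hFp, hF1⟩ := List.map_eq_append_iff.mp hroots
    obtain ⟨Fm, Fq, hF2, hFm, hFq⟩ := List.map_eq_append_iff.mp hF1
    subst hF hF2
    refine ⟨Fp ++ [PT.node r.input Fm] ++ Fq, ?_, ?_, ?_⟩
    · intro c hc
      simp only [List.mem_append, List.mem_singleton] at hc
      rcases hc with (hc | rfl) | hc
      · exact hwf c (by simp [hc])
      · exact Wf.node _ _ r hr rfl hFm (fun c hc => hwf c (by simp [hc]))
      · exact hwf c (by simp [hc])
    · simp [hu, hFp, hFq, rootSym]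
    · rw [← hyield]; simp

/-- Subtree relation. -/
inductive Sub : PT T N → PT T N → Prop
  | refl (t : PT T N) : Sub t t
  | step {q s : PT T N} {A : N} {ts : List (PT T N)} (hs : s ∈ ts) (hqs : Sub q s) :
      Sub q (.node A ts)

lemma Sub.trans' {a b c : PT T N} (hab : Sub a b) (hbc : Sub b c) : Sub a c := by
  induction hbc with
  | refl => exact hab
  | step hs _ ih => exact Sub.step hs ih

lemma sub_of_mem {s : PT T N} {A : N} {ts : List (PT T N)} (hs : s ∈ ts) :
    Sub s (.node A ts) := Sub.step hs (Sub.refl s)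

lemma size_lt_of_mem {s : PT T N} {A : N} {ts : List (PT T N)} (hs : s ∈ ts) :
    PT.size s < PT.size (.node A ts) := by
  rw [PT.size_node]
  have : PT.size s ≤ (ts.map PT.size).sum := List.le_sum_of_mem (List.mem_map_of_mem hs)
  omega

lemma Sub.size_le {q t : PT T N} (h : Sub q t) : PT.size q ≤ PT.size t := by
  induction h with
  | refl => exact le_refl _
  | step hs _ ih => exact ih.trans (size_lt_of_mem hs).le

lemma Sub.size_lt {q s t : PT T N} (hqs : Sub q s) {A : N} {ts : List (PT T N)}
    (hs : s ∈ ts) : PT.size q < PT.size (.node A ts) :=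
  lt_of_le_of_lt hqs.size_le (size_lt_of_mem hs)

lemma Sub.wf {q t : PT T g.NT} (ht : Wf g t) (h : Sub q t) : Wf g q := by
  induction h with
  | refl => exact ht
  | step hs hqs ih =>
    cases ht with
    | node A ts r hr hin hout hts => exact ih (hts _ hs)

/-- Decomposition of yields along the subtree relation, with the context derivation. -/
lemma Sub.decomp {q t : PT T g.NT} (ht : Wf g t) (h : Sub q t) :
    ∃ c₁ c₂ : List (Symbol T g.NT),
      PT.yieldS t = c₁ ++ PT.yieldS q ++ c₂ ∧
      g.Derives [PT.rootSym t] (c₁ ++ [PT.rootSym q] ++ c₂) := by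
  induction h with
  | refl => exact ⟨[], [], by simp, by simpa using ContextFreeGrammar.Derives.refl _⟩
  | @step s A ts hs hqs ih =>
    cases ht with
    | node A ts r hr hin hout hts =>
    obtain ⟨d₁, d₂, hds, hdd⟩ := ih (hts _ hs)
    obtain ⟨P, Q, rfl⟩ := List.append_of_mem hs
    -- derivation [nt A] ⇒ ts.map rootSym ⇒* yields of P ++ [rootSym s] ++ yields of Q
    have h1 : g.Produces [PT.rootSym (PT.node A (P ++ s :: Q))] ((P ++ s :: Q).map PT.rootSym) := by
      refine ⟨r, hr, ?_⟩
      rw [hout]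
      have := ContextFreeRule.Rewrites.head (r := r) []
      simpa [PT.rootSym, hin] using this
    have hP : g.Derives (P.map PT.rootSym) ((P.map PT.yieldS).flatten) :=
      derives_flatten P (fun c hc => (hts c (by simp [hc])).derives)
    have hQ : g.Derives (Q.map PT.rootSym) ((Q.map PT.yieldS).flatten) :=
      derives_flatten Q (fun c hc => (hts c (by simp [hc])).derives)
    refine ⟨(P.map PT.yieldS).flatten ++ d₁, d₂ ++ (Q.map PT.yieldS).flatten, ?_, ?_⟩
    · simp [hds]
    · have h2 : g.Derives ((P ++ s :: Q).map PT.rootSym)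
          ((P.map PT.yieldS).flatten ++ ([PT.rootSym s] ++ (Q.map PT.yieldS).flatten)) := by
        have e : (P ++ s :: Q).map PT.rootSym
            = P.map PT.rootSym ++ ([PT.rootSym s] ++ Q.map PT.rootSym) := by simp
        rw [e]
        exact (hP.append_right _).trans
          (((hQ.append_left _).append_left _))
      have h3 : g.Derives [PT.rootSym s] (d₁ ++ [PT.rootSym q] ++ d₂) := hdd
      have h4 := (h3.append_right ((Q.map PT.yieldS).flatten)).append_left
        ((P.map PT.yieldS).flatten)
      refine (h1.trans_derives h2).trans ?_
      simpa [List.append_assoc] using h4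

/-- Replace subtree `s` of `t` by `s'` with the same root symbol and yield. -/
lemma replace_sub {s t : PT T g.NT} (h : Sub s t) :
    ∀ s' : PT T g.NT, Wf g t → Wf g s' → PT.rootSym s' = PT.rootSym s →
      PT.yieldS s' = PT.yieldS s →
      ∃ t', Wf g t' ∧ PT.rootSym t' = PT.rootSym t ∧ PT.yieldS t' = PT.yieldS t ∧
        PT.size t' + PT.size s = PT.size t + PT.size s' := by
  induction h with
  | refl => exact fun s' _ hwf hroot hyield => ⟨s', hwf, hroot, hyield, by omega⟩
  | @step s A ts hs hqs ih =>
    intro s' ht hwf hroot hyield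
    cases ht with
    | node A ts r hr hin hout hts =>
    obtain ⟨c', hc'wf, hc'root, hc'yield, hc'size⟩ := ih s' (hts _ hs) hwf hroot hyield
    obtain ⟨P, Q, rfl⟩ := List.append_of_mem hs
    refine ⟨PT.node A (P ++ c' :: Q), ?_, by simp [PT.rootSym], ?_, ?_⟩
    · refine Wf.node A _ r hr hin ?_ ?_
      · rw [← hout]; simp [hc'root]
      · intro c hc
        simp only [List.mem_append, List.mem_cons] at hc
        rcases hc with hc | rfl | hc
        · exact hts _ (by simp [hc])
        · exact hc'wf
        · exact hts _ (by simp [hc])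
    · simp [hc'yield]
    · simp only [PT.size_node, List.map_append, List.map_cons, List.sum_append, List.sum_cons]
      omega

/-! ### Constants of a grammar and the heavy path -/

section Consts
variable (g)

open Classical in
/-- Number of distinct nonterminals appearing as rule inputs. -/
noncomputable def Kg : ℕ := ((g.rules.toList.map (·.input)).toFinset).card

/-- Bound on branching. -/
noncomputable def Mg : ℕ := max 2 ((g.rules.toList.map (·.output.length)).foldr max 0)

lemma two_le_Mg : 2 ≤ Mg g := le_max_left _ _

lemma one_le_Mg : 1 ≤ Mg g := le_trans (by norm_num) (two_le_Mg g)

end Consts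

lemma foldr_max_bound {l : List ℕ} {a : ℕ} (h : a ∈ l) : a ≤ l.foldr max 0 := by
  induction l with
  | nil => simp at h
  | cons b t ih =>
    rcases List.mem_cons.mp h with rfl | h
    · simp
    · have := ih h; simp; omega

lemma output_le_Mg {r : ContextFreeRule T g.NT} (hr : r ∈ g.rules) : r.output.length ≤ Mg g := by
  have h1 : r.output.length ∈ g.rules.toList.map (fun r => r.output.length) :=
    List.mem_map_of_mem (Finset.mem_toList.mpr hr)
  exact le_trans (foldr_max_bound h1) (le_max_right _ _)

/-- Label of a tree, with default `d` for leaves. -/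
def lab (d : N) : PT T N → N
  | .node A _ => A
  | _ => d

lemma internal_of_two_le {t : PT T g.NT} (hwf : Wf g t) (h2 : 2 ≤ (PT.yieldS t).length) :
    ∃ A ts, t = PT.node A ts ∧ A ∈ g.rules.toList.map (·.input) ∧ ts.length ≤ Mg g := by
  cases hwf with
  | tleaf t => simp at h2
  | nleaf A => simp at h2
  | node A ts r hr hin hout hts =>
    refine ⟨A, ts, rfl, ?_, ?_⟩
    · rw [← hin]; exact List.mem_map_of_mem (Finset.mem_toList.mpr hr)
    · have := congrArg List.length hout
      simp only [List.length_map] at this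
      rw [this]; exact output_le_Mg hr

/-- Parent-child relation (downward). -/
def childRel : PT T N → PT T N → Prop := fun a b => ∃ A ts, a = PT.node A ts ∧ b ∈ ts

lemma chain_sub {s : PT T N} {q : List (PT T N)} (h : List.Chain' childRel (s :: q)) :
    ∀ x ∈ q, Sub x s ∧ PT.size x < PT.size s := by
  induction q generalizing s with
  | nil => simp
  | cons b q' ih =>
    have h1 : childRel s b := (List.isChain_cons_cons.mp h).1
    have h2 := (List.isChain_cons_cons.mp h).2
    obtain ⟨A, ts, rfl, hb⟩ := h1
    intro x hx
    rcases List.mem_cons.mp hx with rfl | hx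
    · exact ⟨sub_of_mem hb, size_lt_of_mem hb⟩
    · obtain ⟨hsub, hlt⟩ := ih h2 x hx
      exact ⟨hsub.trans' (sub_of_mem hb), hlt.trans (size_lt_of_mem hb)⟩

lemma length_flatten_map (ts : List (PT T N)) :
    ((ts.map PT.yieldS).flatten).length = (ts.map (fun c => (PT.yieldS c).length)).sum := by
  induction ts with
  | nil => simp
  | cons c cs ih => simp [ih]

lemma max_elem_sum {l : List ℕ} (hl : l ≠ []) : ∃ a ∈ l, l.sum ≤ a * l.length := by
  induction l with
  | nil => simp at hl
  | cons b t ih =>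
    rcases eq_or_ne t [] with rfl | ht
    · exact ⟨b, by simp⟩
    · obtain ⟨a, ha, hsum⟩ := ih ht
      rcases le_total b a with h | h
      · exact ⟨a, by simp [ha], by simp [List.length_cons, Nat.mul_succ]; omega⟩
      · refine ⟨b, by simp, ?_⟩
        have : t.sum ≤ b * t.length := hsum.trans (Nat.mul_le_mul_right _ h)
        simp [List.length_cons, Nat.mul_succ]; omega

lemma yield_le_of_sub {a b : PT T g.NT} (hwf : Wf g b) (h : Sub a b) :
    (PT.yieldS a).length ≤ (PT.yieldS b).length := by
  obtain ⟨c₁, c₂, hy, -⟩ := h.decomp hwf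
  simp [hy]; omega

lemma exists_base : ∀ (n : ℕ) (t : PT T g.NT), PT.size t = n → Wf g t →
    (Mg g)^(Kg g + 1) ≤ (PT.yieldS t).length →
    ∃ p₀, Sub p₀ t ∧ (Mg g)^(Kg g + 1) ≤ (PT.yieldS p₀).length ∧
      (PT.yieldS p₀).length ≤ (Mg g)^(Kg g + 2) := by
  intro n
  induction n using Nat.strong_induction_on with
  | _ n ih =>
  intro t hsz hwf hlen
  have h2 : 2 ≤ (PT.yieldS t).length :=
    le_trans (le_trans (two_le_Mg g) (Nat.le_self_pow (by omega) _)) hlen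
  obtain ⟨A, ts, rfl, -, htslen⟩ := internal_of_two_le hwf h2
  have hts : ∀ c ∈ ts, Wf g c := by
    cases hwf with | node _ _ r hr hin hout hts => exact hts
  by_cases hex : ∃ c ∈ ts, (Mg g)^(Kg g + 1) ≤ (PT.yieldS c).length
  · obtain ⟨c, hc, hclen⟩ := hex
    obtain ⟨p₀, hsub, h1', h2'⟩ :=
      ih (PT.size c) (hsz ▸ size_lt_of_mem hc) c rfl (hts c hc) hclen
    exact ⟨p₀, hsub.trans' (sub_of_mem hc), h1', h2'⟩
  · push_neg at hex
    refine ⟨_, Sub.refl _, hlen, ?_⟩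
    rw [PT.yieldS_node, length_flatten_map]
    have hb : ∀ a ∈ ts.map (fun c => (PT.yieldS c).length), a ≤ (Mg g)^(Kg g + 1) := by
      intro a ha
      obtain ⟨c, hc, rfl⟩ := List.mem_map.mp ha
      exact (hex c hc).le
    have := List.sum_le_card_nsmul _ _ hb
    simp only [smul_eq_mul, List.length_map] at this
    calc (ts.map (fun c => (PT.yieldS c).length)).sum
        ≤ ts.length * (Mg g)^(Kg g + 1) := this
      _ ≤ (Mg g) * (Mg g)^(Kg g + 1) := Nat.mul_le_mul_right _ htslen
      _ = (Mg g)^(Kg g + 2) := by ring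

lemma exists_chain : ∀ (j : ℕ) (t : PT T g.NT), Wf g t →
    (Mg g)^j * 2 ≤ (PT.yieldS t).length →
    ∃ l, l.length = j ∧ List.Chain' childRel (t :: l) ∧
      ∀ s ∈ t :: l, Wf g s ∧ 2 ≤ (PT.yieldS s).length := by
  intro j
  induction j with
  | zero =>
    intro t hwf hlen
    exact ⟨[], rfl, List.isChain_singleton _, by
      intro s hs; simp at hs; subst hs; exact ⟨hwf, by simpa using hlen⟩⟩
  | succ j ih =>
    intro t hwf hlen
    have hM1 : 1 ≤ (Mg g)^(j+1) := Nat.one_le_pow _ _ (by have := one_le_Mg g; omega)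
    have h2 : 2 ≤ (PT.yieldS t).length := le_trans (by omega) hlen
    obtain ⟨A, ts, rfl, -, htslen⟩ := internal_of_two_le hwf h2
    have hts : ∀ c ∈ ts, Wf g c := by
      cases hwf with | node _ _ r hr hin hout hts => exact hts
    have htsne : ts ≠ [] := by
      rintro rfl; simp at h2
    obtain ⟨a, ha, hsum⟩ := max_elem_sum (l := ts.map (fun c => (PT.yieldS c).length))
      (by simpa using htsne)
    obtain ⟨c, hc, rfl⟩ := List.mem_map.mp ha
    have hclen : (Mg g)^j * 2 ≤ (PT.yieldS c).length := by
      have hyl : (Mg g)^(j+1) * 2 ≤ (ts.map (fun c => (PT.yieldS c).length)).sum := by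
        rw [← length_flatten_map, ← PT.yieldS_node (A := A)]; exact hlen
      have h3 : (Mg g)^(j+1) * 2 ≤ (PT.yieldS c).length * ts.length := by
        calc (Mg g)^(j+1) * 2 ≤ _ := hyl
          _ ≤ (PT.yieldS c).length * (ts.map (fun c => (PT.yieldS c).length)).length := hsum
          _ = (PT.yieldS c).length * ts.length := by simp
      have h4 : (PT.yieldS c).length * ts.length ≤ (PT.yieldS c).length * Mg g :=
        Nat.mul_le_mul_left _ htslen
      have h5 : ((Mg g)^j * 2) * Mg g ≤ (PT.yieldS c).length * Mg g := by
        calc ((Mg g)^j * 2) * Mg g = (Mg g)^(j+1) * 2 := by ring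
          _ ≤ (PT.yieldS c).length * ts.length := h3
          _ ≤ _ := h4
      exact Nat.le_of_mul_le_mul_right h5 (by have := one_le_Mg g; omega)
    obtain ⟨l, hlen', hchain, hprops⟩ := ih c (hts c hc) hclen
    refine ⟨c :: l, by simp [hlen'], List.isChain_cons_cons.mpr ⟨⟨A, ts, rfl, hc⟩, hchain⟩, ?_⟩
    intro s hs
    rcases List.mem_cons.mp hs with rfl | hs
    · exact ⟨hwf, h2⟩
    · exact hprops s hs

/-! ### The pumping lemma -/

/-- `i`-fold repetition of a list. -/
def rep {α : Type*} (i : ℕ) (l : List α) : List α := (List.replicate i l).flatten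

@[simp] lemma rep_zero {α : Type*} (l : List α) : rep 0 l = [] := rfl

lemma rep_succ {α : Type*} (i : ℕ) (l : List α) : rep (i+1) l = l ++ rep i l := by
  simp [rep, List.replicate_succ]

lemma rep_succ' {α : Type*} (i : ℕ) (l : List α) : rep (i+1) l = rep i l ++ l := by
  simp [rep, List.replicate_succ']

lemma map_rep {α β : Type*} (f : α → β) (i : ℕ) (l : List α) :
    (rep i l).map f = rep i (l.map f) := by
  induction i with
  | zero => rfl
  | succ i ih => simp [rep_succ, ih]

@[simp] lemma rep_one {α : Type*} (l : List α) : rep 1 l = l := by simp [rep]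

lemma derives_loop {A : g.NT} {d₁ d₂ : List (Symbol T g.NT)}
    (h : g.Derives [Symbol.nonterminal A] (d₁ ++ [Symbol.nonterminal A] ++ d₂)) :
    ∀ i : ℕ, g.Derives [Symbol.nonterminal A]
      (rep i d₁ ++ [Symbol.nonterminal A] ++ rep i d₂) := by
  intro i
  induction i with
  | zero => simpa using ContextFreeGrammar.Derives.refl _
  | succ i ih =>
    have h2 := (h.append_right (rep i d₂)).append_left (rep i d₁)
    refine (ih.trans ?_)
    rw [rep_succ', rep_succ]
    have e1 : rep i d₁ ++ [Symbol.nonterminal A] ++ rep i d₂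
        = rep i d₁ ++ ([Symbol.nonterminal A] ++ rep i d₂) := by simp
    have e2 : rep i d₁ ++ (d₁ ++ [Symbol.nonterminal A] ++ d₂ ++ rep i d₂)
        = rep i d₁ ++ d₁ ++ ([Symbol.nonterminal A] ++ (d₂ ++ rep i d₂)) := by simp
    rw [e1]
    have := h2
    rw [show [Symbol.nonterminal A] ++ rep i d₂ =
      ([Symbol.nonterminal A] ++ rep i d₂) from rfl] at this
    -- massage h2 to the right form
    have h3 : g.Derives (rep i d₁ ++ ([Symbol.nonterminal A] ++ rep i d₂))
        (rep i d₁ ++ d₁ ++ ([Symbol.nonterminal A] ++ (d₂ ++ rep i d₂))) := by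
      have := (h.append_right (rep i d₂)).append_left (rep i d₁)
      simpa [List.append_assoc] using this
    simpa [List.append_assoc] using h3

theorem cfg_pumping (g : ContextFreeGrammar.{0} T) :
    ∃ p : ℕ, 1 ≤ p ∧ ∀ w ∈ g.language, p ≤ w.length →
      ∃ u v x y z : List T,
        w = u ++ v ++ x ++ y ++ z ∧ (v ++ x ++ y).length ≤ p ∧ v ++ y ≠ [] ∧
        ∀ i : ℕ, u ++ rep i v ++ x ++ rep i y ++ z ∈ g.language := by
  classical
  set K := Kg g with hK
  set M := Mg g with hM
  have hM2 : 2 ≤ M := two_le_Mg g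
  refine ⟨M ^ (K + 2), Nat.one_le_pow _ _ (by omega), ?_⟩
  intro w hwL hwlen
  rw [ContextFreeGrammar.mem_language_iff] at hwL
  obtain ⟨F, hFwf, hFroot, hFyield⟩ := derives_to_forest hwL
  have hlen1 : F.length = 1 := by have := congrArg List.length hFroot; simpa using this
  obtain ⟨t0, rfl⟩ : ∃ t0, F = [t0] := List.length_eq_one_iff.mp hlen1
  have ht0root : PT.rootSym t0 = Symbol.nonterminal g.initial := by simpa using hFroot
  have ht0yield : PT.yieldS t0 = w.map Symbol.terminal := by simpa using hFyield
  have ht0wf : Wf g t0 := hFwf _ (by simp)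
  -- minimal tree
  have hex : ∃ n : ℕ, ∃ t : PT T g.NT, Wf g t ∧ PT.rootSym t = Symbol.nonterminal g.initial ∧
      PT.yieldS t = w.map Symbol.terminal ∧ PT.size t = n :=
    ⟨PT.size t0, t0, ht0wf, ht0root, ht0yield, rfl⟩
  obtain ⟨t, htwf, htroot, htyield, htsize⟩ := Nat.find_spec hex
  have hmin : ∀ t' : PT T g.NT, Wf g t' → PT.rootSym t' = Symbol.nonterminal g.initial →
      PT.yieldS t' = w.map Symbol.terminal → PT.size t ≤ PT.size t' := by
    intro t' h1 h2 h3
    have h4 : Nat.find hex ≤ PT.size t' := Nat.find_le ⟨t', h1, h2, h3, rfl⟩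
    omega
  -- base subtree
  have hwyield : (PT.yieldS t).length = w.length := by rw [htyield]; simp
  have hbase : M ^ (K + 1) ≤ (PT.yieldS t).length := by
    rw [hwyield]
    exact le_trans (Nat.pow_le_pow_right (by omega) (by omega)) hwlen
  obtain ⟨p₀, hp₀sub, hp₀ge, hp₀le⟩ := exists_base (PT.size t) t rfl htwf hbase
  have hp₀wf : Wf g p₀ := hp₀sub.wf htwf
  -- chain of K+1 internal nodes
  have hchainlen : M ^ K * 2 ≤ (PT.yieldS p₀).length := by
    refine le_trans ?_ hp₀ge
    calc M ^ K * 2 ≤ M ^ K * M := Nat.mul_le_mul_left _ hM2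
      _ = M ^ (K + 1) := by ring
  obtain ⟨l, hllen, hchain, hprops⟩ := exists_chain K p₀ hp₀wf hchainlen
  set c : List (PT T g.NT) := p₀ :: l with hc
  have hclen : c.length = K + 1 := by simp [hc, hllen]
  -- labels
  have hlabmem : ∀ s ∈ c, lab g.initial s ∈ g.rules.toList.map (·.input) := by
    intro s hs
    obtain ⟨hswf, hs2⟩ := hprops s hs
    obtain ⟨A, ts, rfl, hA, -⟩ := internal_of_two_le hswf hs2
    simpa [lab] using hA
  have hnotnodup : ¬ (c.map (lab g.initial)).Nodup := by
    intro hnd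
    have h1 : (c.map (lab g.initial)).toFinset.card = K + 1 := by
      rw [List.toFinset_card_of_nodup hnd]; simp [hclen]
    have h2 : (c.map (lab g.initial)).toFinset ⊆ (g.rules.toList.map (·.input)).toFinset := by
      intro a ha
      simp only [List.mem_toFinset] at ha ⊢
      obtain ⟨s, hs, rfl⟩ := List.mem_map.mp ha
      exact hlabmem s hs
    have h3 := Finset.card_le_card h2
    rw [h1] at h3
    simp only [hK, Kg] at h3
    omega
  obtain ⟨xA, hdup⟩ := List.exists_duplicate_iff_not_nodup.mpr hnotnodup
  have hsubl : List.Sublist [xA, xA] (c.map (lab g.initial)) := List.duplicate_iff_sublist.mp hdup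
  rw [List.cons_sublist_iff] at hsubl
  obtain ⟨r1, r2, hr12, hx1, hx2⟩ := hsubl
  rw [List.singleton_sublist] at hx2
  obtain ⟨p', q', hpq⟩ := List.append_of_mem hx1
  have hsplit : c.map (lab g.initial) = p' ++ xA :: (q' ++ r2) := by
    rw [hr12, hpq]; simp
  -- recover trees
  obtain ⟨P, D, hcPD, hPmap, hDmap⟩ := List.map_eq_append_iff.mp hsplit
  cases D with
  | nil => simp at hDmap
  | cons s₁ Q =>
    simp only [List.map_cons, List.cons.injEq] at hDmap
    obtain ⟨hs₁lab, hQmap⟩ := hDmap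
    have hx2' : xA ∈ Q.map (lab g.initial) := by
      rw [hQmap]; simp [hx2]
    obtain ⟨s₂, hs₂Q, hs₂lab⟩ := List.mem_map.mp hx2'
    -- chain facts
    have hsuffix : List.IsSuffix (s₁ :: Q) c := ⟨P, by rw [hcPD]⟩
    have hchain₁ : List.Chain' childRel (s₁ :: Q) := hchain.suffix hsuffix
    obtain ⟨hs₂sub, hs₂lt⟩ := chain_sub hchain₁ s₂ hs₂Q
    have hs₁c : s₁ ∈ c := hsuffix.subset (by simp)
    have hs₂c : s₂ ∈ c := hsuffix.subset (by simp [hs₂Q])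
    obtain ⟨hs₁wf, hs₁2⟩ := hprops s₁ hs₁c
    obtain ⟨hs₂wf, hs₂2⟩ := hprops s₂ hs₂c
    -- root symbols agree
    obtain ⟨A₁, ts₁, hs₁eq, -, -⟩ := internal_of_two_le hs₁wf hs₁2
    obtain ⟨A₂, ts₂, hs₂eq, -, -⟩ := internal_of_two_le hs₂wf hs₂2
    have hA₁ : A₁ = xA := by rw [hs₁eq] at hs₁lab; simpa [lab] using hs₁lab
    have hA₂ : A₂ = xA := by rw [hs₂eq] at hs₂lab; simpa [lab] using hs₂lab
    rw [hA₂, ← hA₁] at hs₂eq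
    subst hs₁eq; subst hs₂eq
    -- s₁ is a subtree of t
    have hs₁p₀ : Sub (PT.node A₁ ts₁) p₀ := by
      rcases List.mem_cons.mp hs₁c with heq | hmem
      · rw [heq]; exact Sub.refl _
      · exact (chain_sub hchain _ hmem).1
    have hs₁t : Sub (PT.node A₁ ts₁) t := hs₁p₀.trans' hp₀sub
    -- decompositions
    obtain ⟨c₁, c₂, hyt, hder₁⟩ := hs₁t.decomp htwf
    obtain ⟨d₁, d₂, hys, hder₂⟩ := hs₂sub.decomp hs₁wf
    have hroots : PT.rootSym (PT.node A₁ ts₁) = Symbol.nonterminal A₁ := rfl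
    have hroots₂ : PT.rootSym (PT.node A₁ ts₂) = Symbol.nonterminal A₁ := rfl
    rw [htroot] at hder₁
    rw [hroots] at hder₁
    rw [hroots, hroots₂] at hder₂
    have hder₃ : g.Derives [Symbol.nonterminal A₁] (PT.yieldS (PT.node A₁ ts₂)) := by
      have := hs₂wf.derives; rwa [hroots₂] at this
    -- d₁ ++ d₂ ≠ []
    have hd : ¬(d₁ = [] ∧ d₂ = []) := by
      rintro ⟨rfl, rfl⟩
      have hyeq : PT.yieldS (PT.node A₁ ts₂) = PT.yieldS (PT.node A₁ ts₁) := by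
        simpa using hys.symm
      obtain ⟨t', ht'wf, ht'root, ht'yield, ht'size⟩ :=
        replace_sub hs₁t (PT.node A₁ ts₂) htwf hs₂wf (by rw [hroots, hroots₂]) hyeq
      have := hmin t' ht'wf (by rw [ht'root, htroot]) (by rw [ht'yield, htyield])
      omega
    -- extract words
    have hwmap : w.map Symbol.terminal
        = c₁ ++ (d₁ ++ (PT.yieldS (PT.node A₁ ts₂) ++ (d₂ ++ c₂))) := by
      rw [← htyield, hyt, hys]; simp
    obtain ⟨u, w1, rfl, hu, hw1⟩ := List.map_eq_append_iff.mp hwmap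
    obtain ⟨v, w2, rfl, hv, hw2⟩ := List.map_eq_append_iff.mp hw1
    obtain ⟨x, w3, rfl, hx, hw3⟩ := List.map_eq_append_iff.mp hw2
    obtain ⟨y, z, rfl, hy, hz⟩ := List.map_eq_append_iff.mp hw3
    refine ⟨u, v, x, y, z, by simp, ?_, ?_, ?_⟩
    · -- length bound
      have h1 : (PT.yieldS (PT.node A₁ ts₁)).length ≤ (PT.yieldS p₀).length :=
        yield_le_of_sub hp₀wf hs₁p₀
      have h2 : (PT.yieldS (PT.node A₁ ts₁)).length = (v ++ x ++ y).length := by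
        rw [hys, ← hv, ← hx, ← hy]; simp
      rw [← h2]
      exact le_trans h1 hp₀le
    · -- v ++ y ≠ []
      intro hvy
      rw [List.append_eq_nil_iff] at hvy
      exact hd ⟨by rw [← hv, hvy.1]; simp, by rw [← hy, hvy.2]; simp⟩
    · -- pumping
      intro i
      rw [ContextFreeGrammar.mem_language_iff]
      have hloop := derives_loop hder₂ i
      have hmid : g.Derives [Symbol.nonterminal A₁]
          (rep i d₁ ++ PT.yieldS (PT.node A₁ ts₂) ++ rep i d₂) := by
        refine hloop.trans ?_
        have := (hder₃.append_right (rep i d₂)).append_left (rep i d₁)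
        simpa [List.append_assoc] using this
      have hfull : g.Derives [Symbol.nonterminal g.initial]
          (c₁ ++ (rep i d₁ ++ PT.yieldS (PT.node A₁ ts₂) ++ rep i d₂) ++ c₂) := by
        refine hder₁.trans ?_
        have := (hmid.append_right c₂).append_left c₁
        simpa [List.append_assoc] using this
      have hmapeq : (u ++ rep i v ++ x ++ rep i y ++ z).map Symbol.terminal
          = c₁ ++ (rep i d₁ ++ PT.yieldS (PT.node A₁ ts₂) ++ rep i d₂) ++ c₂ := by
        simp only [List.map_append, map_rep, hu, hv, hx, hy, hz]
        simp [List.append_assoc]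
      rw [hmapeq]
      exact hfull
end CFPump


/-- The standard symmetric semigroup presentation of `ℤ²`:
`a ↦ (1,0)`, `a⁻¹ ↦ (-1,0)`, `b ↦ (0,1)`, `b⁻¹ ↦ (0,-1)`. -/
def psiZ2 : Fin 4 → ℤ × ℤ := ![(1, 0), (-1, 0), (0, 1), (0, -1)]

/-! ### Application: the word problem of ℤ² -/

lemma sum_psi (l : List (Fin 4)) :
    (l.map psiZ2).sum = ((l.count 0 : ℤ) - l.count 1, (l.count 2 : ℤ) - l.count 3) := by
  induction l with
  | nil => simp; rfl
  | cons a l ih =>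
    rw [List.map_cons, List.sum_cons, ih]
    fin_cases a <;>
      simp [psiZ2, List.count_cons, Prod.ext_iff] <;> ring

lemma wblock (n k : ℕ) (hk : k < (List.replicate n (0:Fin 4) ++ List.replicate n 2 ++
    List.replicate n 1 ++ List.replicate n 3).length) :
    (List.replicate n (0:Fin 4) ++ List.replicate n 2 ++ List.replicate n 1 ++
      List.replicate n 3)[k]
      = if k < n then 0 else if k < 2*n then 2 else if k < 3*n then 1 else 3 := by
  simp only [List.length_append, List.length_replicate] at hk
  by_cases h1 : k < n
  · rw [List.getElem_append_left (by simp; omega), List.getElem_append_left (by simp; omega),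
      List.getElem_append_left (by simp; omega)]
    simp [h1]
  · by_cases h2 : k < 2*n
    · rw [List.getElem_append_left (by simp; omega), List.getElem_append_left (by simp; omega),
        List.getElem_append_right (by simp; omega)]
      simp [h1, h2]
    · by_cases h3 : k < 3*n
      · rw [List.getElem_append_left (by simp; omega), List.getElem_append_right (by simp; omega)]
        simp [h1, h2, h3]
      · rw [List.getElem_append_right (by simp; omega)]
        simp [h1, h2, h3]

lemma windowElem (u f z : List (Fin 4)) (i : ℕ) (hi : i < f.length)
    (h : u.length + i < (u ++ f ++ z).length) : (u ++ f ++ z)[u.length + i] = f[i] := by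
  rw [List.getElem_append_left (by simp; omega), List.getElem_append_right (by omega)]
  congr 1
  omega

/-- The word problem of `ℤ²` with respect to its standard symmetric
semigroup presentation is not context-free. -/
theorem word_problem_Z2_not_contextFree :
    ¬ Language.IsContextFree {w : List (Fin 4) | (w.map psiZ2).sum = (0, 0)} := by
  rintro ⟨g, hg⟩
  obtain ⟨n, hp1, hpump⟩ := CFPump.cfg_pumping g
  set w : List (Fin 4) := List.replicate n 0 ++ List.replicate n 2 ++
    List.replicate n 1 ++ List.replicate n 3 with hw
  have hwcnt0 : w.count 0 = n := by simp [hw, List.count_append, List.count_replicate]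
  have hwcnt1 : w.count 1 = n := by simp [hw, List.count_append, List.count_replicate]
  have hwcnt2 : w.count 2 = n := by simp [hw, List.count_append, List.count_replicate]
  have hwcnt3 : w.count 3 = n := by simp [hw, List.count_append, List.count_replicate]
  have hwmem : w ∈ g.language := by
    rw [hg]
    show (w.map psiZ2).sum = (0, 0)
    rw [sum_psi, hwcnt0, hwcnt1, hwcnt2, hwcnt3]
    simp
  have hwlen : n ≤ w.length := by
    simp only [hw, List.length_append, List.length_replicate]; omega
  obtain ⟨u, v, x, y, z, hdecomp, hlen, hne, hmem⟩ := hpump w hwmem hwlen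
  -- the pumped word (i = 2) is in the language
  have h2 := hmem 2
  rw [hg] at h2
  have h2' : (((u ++ CFPump.rep 2 v ++ x ++ CFPump.rep 2 y ++ z)).map psiZ2).sum = (0, 0) := h2
  have hrep2 : ∀ l : List (Fin 4), CFPump.rep 2 l = l ++ l := by
    intro l; simp [CFPump.rep_succ]
  rw [hrep2, hrep2] at h2'
  rw [sum_psi, Prod.ext_iff] at h2'
  -- the original word is in the language
  have hwsum : (w.map psiZ2).sum = (0, 0) := by
    rw [sum_psi, hwcnt0, hwcnt1, hwcnt2, hwcnt3]; simp
  rw [sum_psi, Prod.ext_iff] at hwsum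
  -- extract count equations
  simp only [List.count_append, Prod.fst, Prod.snd] at h2' hwsum
  have hcnt1 : v.count 0 + y.count 0 = v.count 1 + y.count 1 := by
    obtain ⟨e1, -⟩ := h2'
    obtain ⟨e1', -⟩ := hwsum
    have hd := congrArg (List.count 0) hdecomp
    have hd' := congrArg (List.count 1) hdecomp
    simp only [List.count_append] at hd hd'
    push_cast at e1 e1'
    omega
  have hcnt2 : v.count 2 + y.count 2 = v.count 3 + y.count 3 := by
    obtain ⟨-, e2⟩ := h2'
    obtain ⟨-, e2'⟩ := hwsum
    have hd := congrArg (List.count 2) hdecomp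
    have hd' := congrArg (List.count 3) hdecomp
    simp only [List.count_append] at hd hd'
    push_cast at e2 e2'
    omega
  -- window facts
  set f : List (Fin 4) := v ++ x ++ y with hf
  have hw2 : w = u ++ f ++ z := by rw [hdecomp, hf]; simp [List.append_assoc]
  have hflen : f.length ≤ n := hlen
  have hwval : ∀ (k : ℕ) (hk : k < w.length),
      w[k] = if k < n then 0 else if k < 2*n then 2 else if k < 3*n then 1 else 3 := by
    intro k hk
    exact (List.getElem_of_eq hw hk).trans (wblock n k (by rw [← hw]; exact hk))
  have hwindow : ∀ a : Fin 4, a ∈ f → ∃ k, u.length ≤ k ∧ k < u.length + f.length ∧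
      ∃ hk : k < w.length, w[k] = a := by
    intro a ha
    obtain ⟨i, hi, hia⟩ := List.mem_iff_getElem.mp ha
    have hk : u.length + i < w.length := by rw [hw2]; simp; omega
    refine ⟨u.length + i, by omega, by omega, hk, ?_⟩
    have heq : w[u.length + i] = f[i] :=
      (List.getElem_of_eq hw2 hk).trans (windowElem u f z i hi (by rw [← hw2]; exact hk))
    rw [heq, hia]
  -- exclusion of letter pairs in the window
  have hex01 : ¬((0 : Fin 4) ∈ f ∧ (1 : Fin 4) ∈ f) := by
    rintro ⟨h0, h1⟩
    obtain ⟨k0, hk0l, hk0r, hk0w, hk0v⟩ := hwindow 0 h0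
    obtain ⟨k1, hk1l, hk1r, hk1w, hk1v⟩ := hwindow 1 h1
    rw [hwval k0 hk0w] at hk0v
    rw [hwval k1 hk1w] at hk1v
    have c0 : k0 < n := by
      split_ifs at hk0v with h1 h2 h3
      · exact h1
      · exact absurd hk0v (by decide)
      · exact absurd hk0v (by decide)
      · exact absurd hk0v (by decide)
    have c1 : 2*n ≤ k1 := by
      split_ifs at hk1v with h1 h2 h3
      · exact absurd hk1v (by decide)
      · exact absurd hk1v (by decide)
      · omega
      · exact absurd hk1v (by decide)
    omega
  have hex23 : ¬((2 : Fin 4) ∈ f ∧ (3 : Fin 4) ∈ f) := by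
    rintro ⟨h0, h1⟩
    obtain ⟨k0, hk0l, hk0r, hk0w, hk0v⟩ := hwindow 2 h0
    obtain ⟨k1, hk1l, hk1r, hk1w, hk1v⟩ := hwindow 3 h1
    rw [hwval k0 hk0w] at hk0v
    rw [hwval k1 hk1w] at hk1v
    have c0 : k0 < 2*n := by
      split_ifs at hk0v with h1 h2 h3
      · exact absurd hk0v (by decide)
      · omega
      · exact absurd hk0v (by decide)
      · exact absurd hk0v (by decide)
    have c1 : 3*n ≤ k1 := by
      split_ifs at hk1v with h1 h2 h3
      · exact absurd hk1v (by decide)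
      · exact absurd hk1v (by decide)
      · exact absurd hk1v (by decide)
      · omega
    omega
  -- counts of every letter in v ++ y vanish
  have hmemf : ∀ a : Fin 4, a ∈ v ++ y → a ∈ f := by
    intro a ha
    rcases List.mem_append.mp ha with h | h
    · exact List.mem_append.mpr (Or.inl (List.mem_append.mpr (Or.inl h)))
    · exact List.mem_append.mpr (Or.inr h)
  have hc0 : (v ++ y).count 0 = 0 := by
    by_contra hc
    have h0 : (0 : Fin 4) ∈ v ++ y := by
      rw [← List.count_pos_iff]; omega
    have h1 : (1 : Fin 4) ∈ v ++ y := by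
      rw [← List.count_pos_iff]
      simp only [List.count_append] at *
      omega
    exact hex01 ⟨hmemf _ h0, hmemf _ h1⟩
  have hc1 : (v ++ y).count 1 = 0 := by
    simp only [List.count_append] at hc0 ⊢
    omega
  have hc2 : (v ++ y).count 2 = 0 := by
    by_contra hc
    have h2m : (2 : Fin 4) ∈ v ++ y := by
      rw [← List.count_pos_iff]; omega
    have h3m : (3 : Fin 4) ∈ v ++ y := by
      rw [← List.count_pos_iff]
      simp only [List.count_append] at *
      omega
    exact hex23 ⟨hmemf _ h2m, hmemf _ h3m⟩
  have hc3 : (v ++ y).count 3 = 0 := by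
    simp only [List.count_append] at hc2 ⊢
    omega
  -- hence v ++ y = [], contradiction
  apply hne
  rw [List.eq_nil_iff_forall_not_mem]
  intro a ha
  fin_cases a
  · exact List.count_eq_zero.mp hc0 ha
  · exact List.count_eq_zero.mp hc1 ha
  · exact List.count_eq_zero.mp hc2 ha
  · exact List.count_eq_zero.mp hc3 ha
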